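/- arXiv:1701.06757 — 3 statements merged into one kernel-verified Lean document; each statement's English description precedes it below -/
import Mathlib

section
/- For natural numbers u, v ≥ 3, the inequality π/u + π/v > π/2 holds if and only if the determinant of the 3×3 matrix [[1, -cos(π/u), 0], [-cos(π/u), 1, -cos(π/v)], [0, -cos(π/v), 1]] is positive. -/
open Real Matrix

theorem statement0 (u v : ℕ) (hu : 3 ≤ u) (hv : 3 ≤ v) :
    π / u + π / v > π / 2 ↔
      0 < (!![1, -Real.cos (π / u), 0;
              -Real.cos (π / u), 1, -Real.cos (π / v);
              0, -Real.cos (π / v), 1] : Matrix (Fin 3) (Fin 3) ℝ).det := by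
  have hπ := Real.pi_pos
  have hu' : (3:ℝ) ≤ u := by exact_mod_cast hu
  have hv' : (3:ℝ) ≤ v := by exact_mod_cast hv
  set a := π / u with ha
  set b := π / v with hb
  have ha0 : 0 < a := div_pos hπ (by linarith)
  have hb0 : 0 < b := div_pos hπ (by linarith)
  have ha2 : a ≤ π / 2 := by
    rw [ha, div_le_div_iff₀ (by linarith) (by norm_num)]; nlinarith
  have hb2 : b ≤ π / 2 := by
    rw [hb, div_le_div_iff₀ (by linarith) (by norm_num)]; nlinarith
  have hdet : (!![1, -Real.cos a, 0;
              -Real.cos a, 1, -Real.cos b;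
              0, -Real.cos b, 1] : Matrix (Fin 3) (Fin 3) ℝ).det
      = Real.sin a ^ 2 - Real.cos b ^ 2 := by
    rw [Matrix.det_fin_three]
    simp [Matrix.cons_val_zero, Matrix.cons_val_one]
    nlinarith [Real.sin_sq_add_cos_sq a]
  rw [hdet]
  have hsa : 0 < Real.sin a := Real.sin_pos_of_pos_of_lt_pi ha0 (by linarith)
  have hcb : 0 ≤ Real.cos b := Real.cos_nonneg_of_mem_Icc ⟨by linarith, hb2⟩
  have key : Real.cos b < Real.sin a ↔ π / 2 < a + b := by
    rw [← Real.sin_pi_div_two_sub b]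
    constructor
    · intro h
      by_contra hle
      push_neg at hle
      have := Real.strictMonoOn_sin.le_iff_le (a := a) (b := π/2 - b)
        ⟨by linarith, ha2⟩ ⟨by linarith, by linarith⟩
      have : Real.sin a ≤ Real.sin (π/2 - b) := (this).2 (by linarith)
      linarith
    · intro h
      exact Real.sin_lt_sin_of_lt_of_le_pi_div_two (by linarith) ha2 (by linarith)
  constructor
  · intro h
    have h2 : Real.cos b < Real.sin a := key.2 h
    nlinarith
  · intro h
    apply key.1
    nlinarith
end

section
/- For any real u, v, w with π/u + π/v < π/2 and π/v + π/w < π/2 and u, v, w ≥ 3, one has sin(π/u)·sin(π/w) < cos(π/v), i.e. the full Coxeter–Schläfli determinant B = sin²(π/u)sin²(π/w) - cos²(π/v) is negative. -/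
open Real

theorem statement13 (u v w : ℝ) (hu : 3 ≤ u) (hv : 3 ≤ v) (hw : 3 ≤ w)
    (h1 : π / u + π / v < π / 2) (h2 : π / v + π / w < π / 2) :
    Real.sin (π / u) * Real.sin (π / w) < Real.cos (π / v) ∧
    Real.sin (π / u) ^ 2 * Real.sin (π / w) ^ 2 - Real.cos (π / v) ^ 2 < 0 := by
  have hπ := Real.pi_pos
  have hu0 : 0 < π / u := div_pos hπ (by linarith)
  have hw0 : 0 < π / w := div_pos hπ (by linarith)
  have hv0 : 0 < π / v := div_pos hπ (by linarith)
  have hsinu : Real.sin (π / u) < Real.cos (π / v) := by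
    rw [← Real.sin_pi_div_two_sub]
    exact Real.sin_lt_sin_of_lt_of_le_pi_div_two (by linarith) (by linarith) (by linarith)
  have hsu0 : 0 < Real.sin (π / u) := Real.sin_pos_of_pos_of_lt_pi hu0 (by linarith)
  have hsw0 : 0 < Real.sin (π / w) := Real.sin_pos_of_pos_of_lt_pi hw0 (by linarith)
  have hsw1 : Real.sin (π / w) ≤ 1 := Real.sin_le_one _
  have hmain : Real.sin (π / u) * Real.sin (π / w) < Real.cos (π / v) :=
    lt_of_le_of_lt (mul_le_of_le_one_right hsu0.le hsw1) hsinu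
  refine ⟨hmain, ?_⟩
  nlinarith [mul_pos hsu0 hsw0]
end

section
/- For u, v, w ≥ 3 real with B = sin²(π/u)sin²(π/w) - cos²(π/v) ≠ 0, the matrix (1/B)·M, where M is the symmetric 4×4 matrix with entries m₀₀ = sin²(π/w) - cos²(π/v), m₀₁ = cos(π/u)sin²(π/w), m₀₂ = cos(π/u)cos(π/v), m₀₃ = cos(π/u)cos(π/v)cos(π/w), m₁₁ = sin²(π/w), m₁₂ = cos(π/v), m₁₃ = cos(π/w)cos(π/v), m₂₂ = sin²(π/u), m₂₃ = cos(π/w)sin²(π/u), m₃₃ = sin²(π/u) - cos²(π/v), is the inverse of the Coxeter–Schläfli matrix [[1, -cos(π/u), 0, 0], [-cos(π/u), 1, -cos(π/v), 0], [0, -cos(π/v), 1, -cos(π/w)], [0, 0, -cos(π/w), 1]]. -/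
open Real Matrix

/-- The Coxeter–Schläfli matrix `(b^{ij})` of the orthoscheme `W_{uvw}`. -/
noncomputable def CSMatrix (u v w : ℝ) : Matrix (Fin 4) (Fin 4) ℝ :=
  !![1, -Real.cos (π / u), 0, 0;
     -Real.cos (π / u), 1, -Real.cos (π / v), 0;
     0, -Real.cos (π / v), 1, -Real.cos (π / w);
     0, 0, -Real.cos (π / w), 1]

/-- The matrix `M` of (3.1), with `(a_{ij}) = (1/B)·M`. -/
noncomputable def CSInvNum (u v w : ℝ) : Matrix (Fin 4) (Fin 4) ℝ :=
  !![Real.sin (π / w) ^ 2 - Real.cos (π / v) ^ 2,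
       Real.cos (π / u) * Real.sin (π / w) ^ 2,
       Real.cos (π / u) * Real.cos (π / v),
       Real.cos (π / u) * Real.cos (π / v) * Real.cos (π / w);
     Real.cos (π / u) * Real.sin (π / w) ^ 2,
       Real.sin (π / w) ^ 2,
       Real.cos (π / v),
       Real.cos (π / w) * Real.cos (π / v);
     Real.cos (π / u) * Real.cos (π / v),
       Real.cos (π / v),
       Real.sin (π / u) ^ 2,
       Real.cos (π / w) * Real.sin (π / u) ^ 2;
     Real.cos (π / u) * Real.cos (π / v) * Real.cos (π / w),
       Real.cos (π / w) * Real.cos (π / v),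
       Real.cos (π / w) * Real.sin (π / u) ^ 2,
       Real.sin (π / u) ^ 2 - Real.cos (π / v) ^ 2]


private lemma one4 : (1 : Matrix (Fin 4) (Fin 4) ℝ) =
    !![1,0,0,0; 0,1,0,0; 0,0,1,0; 0,0,0,1] := by
  ext i j
  fin_cases i <;> fin_cases j <;>
    simp [Matrix.one_apply, Matrix.vecHead, Matrix.vecTail]

private lemma auxL (a b c : ℝ) :
    (!![1, -a, 0, 0; -a, 1, -b, 0; 0, -b, 1, -c; 0, 0, -c, 1] : Matrix (Fin 4) (Fin 4) ℝ) *
        !![(1-c^2) - b^2, a*(1-c^2), a*b, a*b*c;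
           a*(1-c^2), 1-c^2, b, c*b;
           a*b, b, 1-a^2, c*(1-a^2);
           a*b*c, c*b, c*(1-a^2), (1-a^2) - b^2] =
      ((1-a^2)*(1-c^2)-b^2) • 1 := by
  rw [one4, Matrix.smul_of]
  ext i j
  fin_cases i <;> fin_cases j <;>
    · simp [Matrix.mul_apply, Fin.sum_univ_four, Matrix.vecHead, Matrix.vecTail]
      try ring

private lemma auxR (a b c : ℝ) :
    (!![(1-c^2) - b^2, a*(1-c^2), a*b, a*b*c;
           a*(1-c^2), 1-c^2, b, c*b;
           a*b, b, 1-a^2, c*(1-a^2);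
           a*b*c, c*b, c*(1-a^2), (1-a^2) - b^2] : Matrix (Fin 4) (Fin 4) ℝ) *
        !![1, -a, 0, 0; -a, 1, -b, 0; 0, -b, 1, -c; 0, 0, -c, 1] =
      ((1-a^2)*(1-c^2)-b^2) • 1 := by
  rw [one4, Matrix.smul_of]
  ext i j
  fin_cases i <;> fin_cases j <;>
    · simp [Matrix.mul_apply, Fin.sum_univ_four, Matrix.vecHead, Matrix.vecTail]
      try ring

private lemma aux (a b c : ℝ) (hB : (1-a^2)*(1-c^2)-b^2 ≠ 0) :
    (!![1, -a, 0, 0; -a, 1, -b, 0; 0, -b, 1, -c; 0, 0, -c, 1] : Matrix (Fin 4) (Fin 4) ℝ) *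
      (((1-a^2)*(1-c^2)-b^2)⁻¹ •
        !![(1-c^2) - b^2, a*(1-c^2), a*b, a*b*c;
           a*(1-c^2), 1-c^2, b, c*b;
           a*b, b, 1-a^2, c*(1-a^2);
           a*b*c, c*b, c*(1-a^2), (1-a^2) - b^2]) = 1 ∧
    (((1-a^2)*(1-c^2)-b^2)⁻¹ •
        !![(1-c^2) - b^2, a*(1-c^2), a*b, a*b*c;
           a*(1-c^2), 1-c^2, b, c*b;
           a*b, b, 1-a^2, c*(1-a^2);
           a*b*c, c*b, c*(1-a^2), (1-a^2) - b^2]) *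
      !![1, -a, 0, 0; -a, 1, -b, 0; 0, -b, 1, -c; 0, 0, -c, 1] = 1 := by
  constructor
  · rw [Matrix.mul_smul, auxL, smul_smul, inv_mul_cancel₀ hB, one_smul]
  · rw [Matrix.smul_mul, auxR, smul_smul, inv_mul_cancel₀ hB, one_smul]

/-- (3.1): `(1/B)·M` is the inverse of the Coxeter–Schläfli matrix. -/
theorem statement16 (u v w : ℝ) (hu : 3 ≤ u) (hv : 3 ≤ v) (hw : 3 ≤ w)
    (hB : Real.sin (π / u) ^ 2 * Real.sin (π / w) ^ 2 - Real.cos (π / v) ^ 2 ≠ 0) :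
    CSMatrix u v w *
        ((Real.sin (π / u) ^ 2 * Real.sin (π / w) ^ 2 - Real.cos (π / v) ^ 2)⁻¹ •
          CSInvNum u v w) = 1 ∧
    ((Real.sin (π / u) ^ 2 * Real.sin (π / w) ^ 2 - Real.cos (π / v) ^ 2)⁻¹ •
          CSInvNum u v w) * CSMatrix u v w = 1 := by
  have key := aux (Real.cos (π/u)) (Real.cos (π/v)) (Real.cos (π/w))
  have hB' : (1 - Real.cos (π/u)^2) * (1 - Real.cos (π/w)^2) - Real.cos (π/v)^2 ≠ 0 := by
    simpa [Real.sin_sq] using hB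
  have h1 : CSMatrix u v w =
      !![1, -Real.cos (π/u), 0, 0; -Real.cos (π/u), 1, -Real.cos (π/v), 0;
         0, -Real.cos (π/v), 1, -Real.cos (π/w); 0, 0, -Real.cos (π/w), 1] := rfl
  have h2 : CSInvNum u v w =
      !![(1-Real.cos (π/w)^2) - Real.cos (π/v)^2, Real.cos (π/u)*(1-Real.cos (π/w)^2),
           Real.cos (π/u)*Real.cos (π/v), Real.cos (π/u)*Real.cos (π/v)*Real.cos (π/w);
         Real.cos (π/u)*(1-Real.cos (π/w)^2), 1-Real.cos (π/w)^2, Real.cos (π/v),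
           Real.cos (π/w)*Real.cos (π/v);
         Real.cos (π/u)*Real.cos (π/v), Real.cos (π/v), 1-Real.cos (π/u)^2,
           Real.cos (π/w)*(1-Real.cos (π/u)^2);
         Real.cos (π/u)*Real.cos (π/v)*Real.cos (π/w), Real.cos (π/w)*Real.cos (π/v),
           Real.cos (π/w)*(1-Real.cos (π/u)^2), (1-Real.cos (π/u)^2) - Real.cos (π/v)^2] := by
    unfold CSInvNum
    simp [Real.sin_sq]
  have hBeq : Real.sin (π/u)^2 * Real.sin (π/w)^2 - Real.cos (π/v)^2 =
      (1-Real.cos (π/u)^2)*(1-Real.cos (π/w)^2) - Real.cos (π/v)^2 := by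
    simp [Real.sin_sq]
  rw [h1, h2, hBeq]
  exact key hB'
end
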